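/- Let x_1,...,x_m be positive integers (m ≥ 2), let y = gcd(σ_{m−1}(x_1,...,x_m), x_1⋯x_m), let p be a prime, and let V_p = max_{i∈[m−1]} v_p(x_i). Then v_p(y) ≥ v_p(x_1⋯x_{m−1}) − V_p and v_p(y) ≤ v_p(x_1⋯x_{m−1}) + V_p. -/

import Mathlib

/-- with `y = gcd(σ_{m−1}(x), x 0 ⋯ x (m-1))` and
`V = max_{i < m-1} v_p(x i)`, one has
`v_p(x 0 ⋯ x (m-2)) − V ≤ v_p(y) ≤ v_p(x 0 ⋯ x (m-2)) + V`. -/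
theorem stmt_13 (m : ℕ) (hm : 2 ≤ m) (x : ℕ → ℕ) (hx : ∀ i < m, 0 < x i)
    (p : ℕ) (hp : p.Prime) :
    ((∏ i ∈ Finset.range (m - 1), x i).factorization p : ℤ) -
        ((Finset.range (m - 1)).sup fun i => (x i).factorization p) ≤
      ((Nat.gcd (∑ i ∈ Finset.range m, ∏ j ∈ (Finset.range m).erase i, x j)
          (∏ i ∈ Finset.range m, x i)).factorization p : ℤ) ∧
    ((Nat.gcd (∑ i ∈ Finset.range m, ∏ j ∈ (Finset.range m).erase i, x j)
        (∏ i ∈ Finset.range m, x i)).factorization p : ℤ) ≤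
      ((∏ i ∈ Finset.range (m - 1), x i).factorization p : ℤ) +
        ((Finset.range (m - 1)).sup fun i => (x i).factorization p) := by
  obtain ⟨n, rfl⟩ : ∃ n, m = n + 1 := ⟨m - 1, by omega⟩
  have hn : 1 ≤ n := by omega
  simp only [Nat.add_sub_cancel]
  set a : ℕ → ℕ := fun i => (x i).factorization p with ha
  set A := ∑ i ∈ Finset.range n, a i with hA
  set V := (Finset.range n).sup a with hV
  have hxpos : ∀ i ∈ Finset.range (n + 1), x i ≠ 0 :=
    fun i hi => (hx i (Finset.mem_range.mp hi)).ne'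
  set P := ∏ i ∈ Finset.range (n + 1), x i with hP
  set T : ℕ → ℕ := fun i => ∏ j ∈ (Finset.range (n + 1)).erase i, x j with hT
  set S := ∑ i ∈ Finset.range (n + 1), T i with hS
  have hTpos : ∀ i, T i ≠ 0 := fun i =>
    Finset.prod_ne_zero_iff.mpr fun j hj => hxpos j (Finset.mem_of_mem_erase hj)
  have hPpos : P ≠ 0 := Finset.prod_ne_zero_iff.mpr hxpos
  have hSpos : S ≠ 0 := by
    have : 0 < S := Finset.sum_pos (fun i _ => Nat.pos_of_ne_zero (hTpos i))
      ⟨0, Finset.mem_range.mpr (by omega)⟩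
    omega
  have hgcd : Nat.gcd S P ≠ 0 := fun h => hPpos (Nat.eq_zero_of_gcd_eq_zero_right h)
  have hvP : P.factorization p = A + a n := by
    rw [hP, Nat.factorization_prod hxpos, Finset.sum_apply', Finset.sum_range_succ]
  have hvProd : (∏ i ∈ Finset.range n, x i).factorization p = A := by
    rw [Nat.factorization_prod fun i hi =>
      hxpos i (Finset.mem_range.mpr (by have := Finset.mem_range.mp hi; omega)),
      Finset.sum_apply']
  have key : ∀ i ∈ Finset.range (n + 1), T i * x i = P := fun i hi =>
    Finset.prod_erase_mul _ _ hi
  have hvT : ∀ i ∈ Finset.range (n + 1), (T i).factorization p + a i = A + a n := by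
    intro i hi
    have h1 : (T i).factorization p + (x i).factorization p = P.factorization p := by
      rw [← Finsupp.add_apply, ← Nat.factorization_mul (hTpos i) (hxpos i hi), key i hi]
    rw [hvP] at h1
    exact h1
  have hSdvd : p ^ (A + a n - max V (a n)) ∣ S := by
    apply Finset.dvd_sum
    intro i hi
    rw [hp.pow_dvd_iff_le_factorization (hTpos i)]
    have h1 := hvT i hi
    have h2 : a i ≤ max V (a n) := by
      rcases Nat.lt_succ_iff_lt_or_eq.mp (Finset.mem_range.mp hi) with h | rfl
      · exact le_trans (Finset.le_sup (Finset.mem_range.mpr h)) (le_max_left _ _)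
      · exact le_max_right _ _
    omega
  have hPk : p ^ (A + a n - max V (a n)) ∣ P :=
    (hp.pow_dvd_iff_le_factorization hPpos).mpr (by omega)
  have hglow : A + a n - max V (a n) ≤ (Nat.gcd S P).factorization p :=
    (hp.pow_dvd_iff_le_factorization hgcd).mp (Nat.dvd_gcd hSdvd hPk)
  have hgP : (Nat.gcd S P).factorization p ≤ P.factorization p :=
    (Nat.factorization_le_iff_dvd hgcd hPpos).mpr (Nat.gcd_dvd_right S P) p
  have hgS : (Nat.gcd S P).factorization p ≤ S.factorization p :=
    (Nat.factorization_le_iff_dvd hgcd hSpos).mpr (Nat.gcd_dvd_left S P) p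
  have hmx : max V (a n) ≤ V + a n := max_le (Nat.le_add_right _ _) (Nat.le_add_left _ _)
  rw [hvProd]
  by_cases hc : a n ≤ V
  · constructor <;> [skip; skip] <;> omega
  · push_neg at hc
    have hd1 : p ^ (A + 1) ∣ ∑ i ∈ Finset.range n, T i := by
      apply Finset.dvd_sum
      intro i hi
      rw [hp.pow_dvd_iff_le_factorization (hTpos i)]
      have h1 := hvT i (Finset.mem_range.mpr (by have := Finset.mem_range.mp hi; omega))
      have h2 : a i ≤ V := Finset.le_sup hi
      omega
    have hd2 : ¬ p ^ (A + 1) ∣ T n := by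
      rw [hp.pow_dvd_iff_le_factorization (hTpos n)]
      have h1 := hvT n (Finset.mem_range.mpr (by omega))
      omega
    have hdS : ¬ p ^ (A + 1) ∣ S := by
      rw [hS, Finset.sum_range_succ]
      intro h
      exact hd2 ((Nat.dvd_add_right hd1).mp h)
    have hvSle : S.factorization p ≤ A := by
      by_contra h
      exact hdS ((hp.pow_dvd_iff_le_factorization hSpos).mpr (by omega))
    constructor <;> omega
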